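/- Suppose the Heisenberg group N₃ = ⟨h₁, h₂, h₃ | [h₁,h₂] = h₃, h₁h₃ = h₃h₁, h₂h₃ = h₃h₂⟩ acts faithfully by orientation-preserving homeomorphisms of [0,1]. If x ∈ [0,1] is not fixed by h₃, then at least one of h₁, h₂ moves J_{h₃}(x). -/

import Mathlib

/-- The relations of the discrete Heisenberg group
`⟨h₁, h₂, h₃ ∣ [h₁,h₂] = h₃, h₁h₃ = h₃h₁, h₂h₃ = h₃h₂⟩` as words in the free group
on three generators. -/
def heisRels : Set (FreeGroup (Fin 3)) :=
  { FreeGroup.of 0 * FreeGroup.of 1 * (FreeGroup.of 0)⁻¹ * (FreeGroup.of 1)⁻¹ *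
      (FreeGroup.of 2)⁻¹,
    FreeGroup.of 0 * FreeGroup.of 2 * (FreeGroup.of 0)⁻¹ * (FreeGroup.of 2)⁻¹,
    FreeGroup.of 1 * FreeGroup.of 2 * (FreeGroup.of 1)⁻¹ * (FreeGroup.of 2)⁻¹ }

/-- The discrete Heisenberg group `N₃`, given by its standard presentation. -/
abbrev N3 : Type := PresentedGroup heisRels

/-- The generator `h₁` of the Heisenberg group `N₃`. -/
def h₁ : N3 := PresentedGroup.of 0

/-- The generator `h₂` of the Heisenberg group `N₃`. -/
def h₂ : N3 := PresentedGroup.of 1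

/-- The generator `h₃` of the Heisenberg group `N₃`. -/
def h₃ : N3 := PresentedGroup.of 2

/-- The unit interval `[0,1]` as a subset of `ℝ`. -/
noncomputable def II : Set ℝ := Set.Icc 0 1

/-- `f : ℝ → ℝ` restricts to an orientation-preserving homeomorphism of `[0,1]`. -/
def IsOPHomeoI (f : ℝ → ℝ) : Prop :=
  Set.BijOn f II II ∧ StrictMonoOn f II ∧ ContinuousOn f II

/-- `g` is `β`-Hölder continuous on `[0,1]` with constant `C`. -/
def HolderOnI (β C : ℝ) (g : ℝ → ℝ) : Prop :=
  ∀ x ∈ II, ∀ y ∈ II, |g x - g y| ≤ C * |x - y| ^ β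

/-- `f : ℝ → ℝ` restricts to an orientation-preserving `C¹` diffeomorphism of `[0,1]`:
a strictly increasing bijection of `[0,1]`, continuously differentiable on `[0,1]`
with everywhere positive derivative. -/
def IsC1DiffeoI (f : ℝ → ℝ) : Prop :=
  Set.BijOn f II II ∧ StrictMonoOn f II ∧
    (∀ x ∈ II, HasDerivWithinAt f (derivWithin f II x) II x) ∧
    ContinuousOn (derivWithin f II) II ∧
    ∀ x ∈ II, 0 < derivWithin f II x

/-- `f : ℝ → ℝ` restricts to an orientation-preserving `C^{1+α}` diffeomorphism of `[0,1]`: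
a `C¹` diffeomorphism whose derivative is `α`-Hölder continuous. -/
def IsC1aDiffeoI (α : ℝ) (f : ℝ → ℝ) : Prop :=
  IsC1DiffeoI f ∧ ∃ C > 0, HolderOnI α C (derivWithin f II)

/-- `φ` is an action of `G` on `[0,1]`: `φ 1` is the identity on `[0,1]` and
`φ (g * h)` is the composition `φ g ∘ φ h` on `[0,1]`. -/
def IsActionOnI {G : Type*} [Group G] (φ : G → ℝ → ℝ) : Prop :=
  Set.EqOn (φ 1) id II ∧ ∀ g h : G, Set.EqOn (φ (g * h)) (φ g ∘ φ h) II

/-- The action `φ` of `G` on `[0,1]` is faithful: elements acting identically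
on `[0,1]` coincide. -/
def FaithfulOnI {G : Type*} [Group G] (φ : G → ℝ → ℝ) : Prop :=
  ∀ g h : G, Set.EqOn (φ g) (φ h) II → g = h

/-- `J_g(x) = [inf_{n ∈ ℤ} gⁿ(x), sup_{n ∈ ℤ} gⁿ(x)]` for the action `φ`. -/
noncomputable def Jseg {G : Type*} [Group G] (φ : G → ℝ → ℝ) (g : G) (x : ℝ) : Set ℝ :=
  Set.Icc (⨅ n : ℤ, φ (g ^ n) x) (⨆ n : ℤ, φ (g ^ n) x)

/-- The map `f` moves the set `s`: `f(s)` and `s` are distinct and have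
disjoint interiors. -/
def MovesSet (f : ℝ → ℝ) (s : Set ℝ) : Prop :=
  f '' s ≠ s ∧ Disjoint (interior (f '' s)) (interior s)


section HeisAux

open scoped commutatorElement

lemma heis_relOne {r : FreeGroup (Fin 3)} (hr : r ∈ heisRels) :
    PresentedGroup.mk heisRels r = 1 := by
  show (QuotientGroup.mk r : N3) = 1
  rw [QuotientGroup.eq_one_iff]
  exact Subgroup.subset_normalClosure hr

lemma heis_comm1 : Commute h₃ h₁ := by
  have h0 := heis_relOne (r := FreeGroup.of 0 * FreeGroup.of 2 * (FreeGroup.of 0)⁻¹ *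
    (FreeGroup.of 2)⁻¹) (by simp [heisRels])
  have h : ⁅h₁, h₃⁆ = 1 := by
    simpa [commutatorElement_def, h₁, h₃, PresentedGroup.of, map_mul, map_inv] using h0
  exact (commutatorElement_eq_one_iff_commute.mp h).symm

lemma heis_comm2 : Commute h₃ h₂ := by
  have h0 := heis_relOne (r := FreeGroup.of 1 * FreeGroup.of 2 * (FreeGroup.of 1)⁻¹ *
    (FreeGroup.of 2)⁻¹) (by simp [heisRels])
  have h : ⁅h₂, h₃⁆ = 1 := by
    simpa [commutatorElement_def, h₂, h₃, PresentedGroup.of, map_mul, map_inv] using h0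
  exact (commutatorElement_eq_one_iff_commute.mp h).symm

lemma heis_rel_main : h₁ * h₂ * h₁⁻¹ * h₂⁻¹ = h₃ := by
  have h0 := heis_relOne (r := FreeGroup.of 0 * FreeGroup.of 1 * (FreeGroup.of 0)⁻¹ *
    (FreeGroup.of 1)⁻¹ * (FreeGroup.of 2)⁻¹) (by simp [heisRels])
  have h : h₁ * h₂ * h₁⁻¹ * h₂⁻¹ * h₃⁻¹ = 1 := by
    simpa [h₁, h₂, h₃, PresentedGroup.of, map_mul, map_inv] using h0
  have h2 := mul_eq_one_iff_eq_inv.mp h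
  simpa using h2

lemma heis_comm_sq {G : Type*} [Group G] (a b c : G) (hrel : a * b * a⁻¹ * b⁻¹ = c)
    (h1 : Commute c a) (h2 : Commute c b) :
    a ^ 2 * b ^ 2 * (a ^ 2)⁻¹ * (b ^ 2)⁻¹ = c ^ 4 := by
  have hab : a * b = c * (b * a) := by rw [← hrel]; group
  have hab' : ∀ x : G, a * (b * x) = c * (b * (a * x)) := fun x => by
    rw [← mul_assoc, hab, mul_assoc, mul_assoc]
  have k1 : a * c = c * a := h1.symm.eq
  have k1' : ∀ x : G, a * (c * x) = c * (a * x) := fun x => by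
    rw [← mul_assoc, k1, mul_assoc]
  have k2 : b * c = c * b := h2.symm.eq
  have k2' : ∀ x : G, b * (c * x) = c * (b * x) := fun x => by
    rw [← mul_assoc, k2, mul_assoc]
  have main : a ^ 2 * b ^ 2 = c ^ 4 * (b ^ 2 * a ^ 2) := by
    simp only [pow_succ, pow_zero, one_mul, mul_assoc]
    simp only [hab, hab', k1, k1', k2, k2', mul_assoc]
  rw [main]; group

lemma heis_key {G : Type*} [Group G] (φ : G → ℝ → ℝ)
    (hact : IsActionOnI φ) (hhomeo : ∀ g : G, IsOPHomeoI (φ g))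
    (c g1 g2 : G) (hc1 : Commute c g1) (hc2 : Commute c g2)
    (hrel : g1 ^ 2 * g2 ^ 2 * (g1 ^ 2)⁻¹ * (g2 ^ 2)⁻¹ = c ^ 4)
    (x : ℝ) (hx : x ∈ II) (hlt : x < φ c x)
    (hm1 : ¬ MovesSet (φ g1) (Jseg φ c x))
    (hm2 : ¬ MovesSet (φ g2) (Jseg φ c x)) : False := by
  classical
  -- basic action facts
  have mem : ∀ (g : G) {y : ℝ}, y ∈ II → φ g y ∈ II := fun g {y} hy => (hhomeo g).1.mapsTo hy
  have comp : ∀ (g h : G) {y : ℝ}, y ∈ II → φ (g * h) y = φ g (φ h y) :=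
    fun g h {y} hy => hact.2 g h hy
  have one : ∀ {y : ℝ}, y ∈ II → φ (1 : G) y = y := fun hy => hact.1 hy
  have le_iff : ∀ (g : G) {u v : ℝ}, u ∈ II → v ∈ II → (φ g u ≤ φ g v ↔ u ≤ v) :=
    fun g {u v} hu hv => (hhomeo g).2.1.le_iff_le hu hv
  have lt_iff : ∀ (g : G) {u v : ℝ}, u ∈ II → v ∈ II → (φ g u < φ g v ↔ u < v) :=
    fun g {u v} hu hv => (hhomeo g).2.1.lt_iff_lt hu hv
  have invl : ∀ (g : G) {y : ℝ}, y ∈ II → φ g⁻¹ (φ g y) = y := fun g y hy => by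
    rw [← comp g⁻¹ g hy, inv_mul_cancel, one hy]
  have invr : ∀ (g : G) {y : ℝ}, y ∈ II → φ g (φ g⁻¹ y) = y := fun g y hy => by
    have := invl g⁻¹ hy; rwa [inv_inv] at this
  -- the orbit
  set t : ℤ → ℝ := fun n => φ (c ^ n) x with ht
  have tmem : ∀ n : ℤ, t n ∈ II := fun n => mem _ hx
  have t0 : t 0 = x := by simp only [ht, zpow_zero]; exact one hx
  have tsucc : ∀ n : ℤ, t (n + 1) = φ c (t n) := fun n => by
    simp only [ht]
    rw [show (c : G) ^ (n + 1) = c * c ^ n by rw [add_comm, zpow_add, zpow_one], comp c (c ^ n) hx]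
  have tpred : ∀ n : ℤ, φ c⁻¹ (t n) = t (n - 1) := fun n => by
    simp only [ht]
    rw [show (c : G) ^ (n - 1) = c⁻¹ * c ^ n by rw [sub_eq_add_neg, add_comm, zpow_add,
      zpow_neg_one], comp c⁻¹ (c ^ n) hx]
  have tstep : ∀ n : ℤ, t n < t (n + 1) := by
    intro n
    induction n using Int.induction_on with
    | zero => rw [tsucc 0, t0]; exact hlt
    | succ k ih =>
        rw [tsucc (k + 1)]
        calc t (k + 1) = φ c (t k) := tsucc k
          _ < φ c (t (k + 1)) := (lt_iff c (tmem k) (tmem (k + 1))).2 ih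
    | pred k ih =>
        have h2 := (lt_iff c⁻¹ (tmem (-k)) (tmem (-k + 1))).2 ih
        rw [tpred, tpred] at h2
        have e : (-(k : ℤ) + 1 - 1) = -(k : ℤ) - 1 + 1 := by ring
        rw [e] at h2
        exact h2
  have tmono : StrictMono t := strictMono_int_of_lt_succ tstep
  have tbddA : BddAbove (Set.range t) := ⟨1, by rintro y ⟨n, rfl⟩; exact (tmem n).2⟩
  have tbddB : BddBelow (Set.range t) := ⟨0, by rintro y ⟨n, rfl⟩; exact (tmem n).1⟩
  set a := ⨅ n : ℤ, t n with ha
  set b := ⨆ n : ℤ, t n with hb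
  have hJeq : Jseg φ c x = Set.Icc a b := rfl
  rw [hJeq] at hm1 hm2
  have a_le : ∀ n, a ≤ t n := fun n => ciInf_le tbddB n
  have le_b : ∀ n, t n ≤ b := fun n => le_ciSup tbddA n
  have a_lt : ∀ n, a < t n := fun n => lt_of_le_of_lt (a_le (n - 1))
    (by have := tstep (n - 1); rwa [sub_add_cancel] at this)
  have lt_b : ∀ n, t n < b := fun n => lt_of_lt_of_le (tstep n) (le_b (n + 1))
  have amem : a ∈ II := ⟨le_ciInf fun n => (tmem n).1, (a_le 0).trans (tmem 0).2⟩
  have bmem : b ∈ II := ⟨(tmem 0).1.trans (le_b 0), ciSup_le fun n => (tmem n).2⟩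
  have hsub : Set.Icc a b ⊆ II := Set.Icc_subset_Icc amem.1 bmem.2
  have hax : a < x := by have := a_lt 0; rwa [t0] at this
  have hxb : x < b := by have := lt_b 0; rwa [t0] at this
  have hab : a < b := hax.trans hxb
  -- endpoints are fixed by c
  have hstep' : ∀ n : ℤ, t n = φ c (t (n - 1)) := fun n => by
    rw [← tsucc (n - 1), sub_add_cancel]
  have hstep'' : ∀ n : ℤ, t n = φ c⁻¹ (t (n + 1)) := fun n => by
    rw [tpred, add_sub_cancel_right]
  have hfb1 : b ≤ φ c b := ciSup_le fun n => by
    rw [hstep' n]; exact (le_iff c (tmem _) bmem).2 (le_b _)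
  have hfb2 : φ c⁻¹ b ≤ b := by
    have h := (le_iff c⁻¹ bmem (mem c bmem)).2 hfb1
    rwa [invl c bmem] at h
  have hfb3 : b ≤ φ c⁻¹ b := ciSup_le fun n => by
    rw [hstep'' n]; exact (le_iff c⁻¹ (tmem _) bmem).2 (le_b _)
  have hfbinv : φ c⁻¹ b = b := le_antisymm hfb2 hfb3
  have hfixb : φ c b = b := by
    conv_lhs => rw [← hfbinv]
    exact invr c bmem
  have hfa1 : φ c a ≤ a := le_ciInf fun n => by
    rw [hstep' n]; exact (le_iff c amem (tmem _)).2 (a_le _)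
  have hfa2 : φ c⁻¹ a ≤ a := le_ciInf fun n => by
    rw [hstep'' n]; exact (le_iff c⁻¹ amem (tmem _)).2 (a_le _)
  have hfa3 : a ≤ φ c⁻¹ a := by
    have h := (le_iff c⁻¹ (mem c amem) amem).2 hfa1
    rwa [invl c amem] at h
  have hfainv : φ c⁻¹ a = a := le_antisymm hfa2 hfa3
  have hfixa : φ c a = a := by
    conv_lhs => rw [← hfainv]
    exact invr c amem
  -- floor existence for points in the open interval
  have floorEx : ∀ y : ℝ, a < y → y < b → ∃ n : ℤ, t n ≤ y ∧ y < t (n + 1) := by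
    intro y hay hyb
    have hne : ∃ n : ℤ, y < t n := by
      by_contra h; push_neg at h
      exact absurd (ciSup_le h) (not_le.2 hyb)
    have hbdd : ∃ k : ℤ, ∀ z : ℤ, y < t z → k ≤ z := by
      obtain ⟨k, hk⟩ : ∃ k : ℤ, t k ≤ y := by
        by_contra h; push_neg at h
        exact absurd (le_ciInf fun k => (h k).le) (not_le.2 hay)
      exact ⟨k, fun z hz => (tmono.lt_iff_lt.1 (hk.trans_lt hz)).le⟩
    obtain ⟨N, hN, hmin⟩ := Int.exists_least_of_bdd hbdd hne
    refine ⟨N - 1, ?_, ?_⟩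
    · by_contra h; push_neg at h
      have := hmin _ h; omega
    · rwa [sub_add_cancel]
  -- no fixed points of c inside (a,b)
  have nofix : ∀ y : ℝ, a < y → y < b → φ c y ≠ y := by
    intro y hay hyb hfix
    obtain ⟨n, h1, h2⟩ := floorEx y hay hyb
    have hyII : y ∈ II := hsub ⟨hay.le, hyb.le⟩
    have h3 : t (n + 1) ≤ y := by
      rw [tsucc, ← hfix]; exact (le_iff c (tmem n) hyII).2 h1
    exact absurd h2 (not_lt.2 h3)
  -- image of the interval
  have img : ∀ g : G, φ g '' Set.Icc a b = Set.Icc (φ g a) (φ g b) := by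
    intro g
    apply Set.Subset.antisymm
    · rintro _ ⟨z, hz, rfl⟩
      exact ⟨(le_iff g amem (hsub hz)).2 hz.1, (le_iff g (hsub hz) bmem).2 hz.2⟩
    · exact intermediate_value_Icc hab.le ((hhomeo g).2.2.mono hsub)
  -- "does not move" implies "preserves"
  have fixesJ : ∀ g : G, Commute c g → ¬ MovesSet (φ g) (Set.Icc a b) →
      φ g '' Set.Icc a b = Set.Icc a b := by
    intro g hcg hnm
    rw [MovesSet, not_and_or, not_not] at hnm
    rcases hnm with h | h
    · exact h
    · rw [img g, interior_Icc, interior_Icc, Set.not_disjoint_iff] at h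
      obtain ⟨y, hy1, hy2⟩ := h
      have hcga : φ c (φ g a) = φ g a := by
        rw [← comp c g amem, hcg.eq, comp g c amem, hfixa]
      have hcgb : φ c (φ g b) = φ g b := by
        rw [← comp c g bmem, hcg.eq, comp g c bmem, hfixb]
      have ha'b' : φ g a < φ g b := (lt_iff g amem bmem).2 hab
      have inj : Set.InjOn (φ g) II := (hhomeo g).1.2.1
      have haa' : φ g a = a := by
        rcases lt_trichotomy (φ g a) a with h1 | h1 | h1
        · exfalso
          have hamem' : a ∈ Set.Icc (φ g a) (φ g b) := ⟨h1.le, (hy2.1.trans hy1.2).le⟩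
          rw [← img g] at hamem'
          obtain ⟨z, hz, hza⟩ := hamem'
          have hz1 : a < z := by
            rcases eq_or_lt_of_le hz.1 with h2 | h2
            · exfalso; rw [← h2] at hza; exact absurd hza (ne_of_lt h1)
            · exact h2
          have hz2 : z < b := by
            rcases eq_or_lt_of_le hz.2 with h2 | h2
            · exfalso; rw [h2] at hza
              have h3 : a < φ g b := hy2.1.trans hy1.2
              rw [hza] at h3; exact lt_irrefl a h3
            · exact h2
          have hzII : z ∈ II := hsub hz
          have e : φ g (φ c z) = φ c (φ g z) := by
            rw [← comp g c hzII, ← hcg.eq, comp c g hzII]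
          have e2 : φ g (φ c z) = φ g z := by rw [e, hza, hfixa]
          exact absurd (inj (mem c hzII) hzII e2) (nofix z hz1 hz2)
        · exact h1
        · exact absurd hcga (nofix (φ g a) h1 (hy1.1.trans hy2.2))
      have hbb' : φ g b = b := by
        rcases lt_trichotomy (φ g b) b with h1 | h1 | h1
        · exact absurd hcgb (nofix (φ g b) (haa' ▸ ha'b') h1)
        · exact h1
        · exfalso
          have hbmem' : b ∈ Set.Icc (φ g a) (φ g b) := ⟨by rw [haa']; exact hab.le, h1.le⟩
          rw [← img g] at hbmem'
          obtain ⟨z, hz, hzb⟩ := hbmem'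
          have hz1 : a < z := by
            rcases eq_or_lt_of_le hz.1 with h2 | h2
            · exfalso; rw [← h2] at hzb; rw [haa'] at hzb; exact hab.ne hzb
            · exact h2
          have hz2 : z < b := by
            rcases eq_or_lt_of_le hz.2 with h2 | h2
            · exfalso; rw [h2] at hzb; exact h1.ne' hzb
            · exact h2
          have hzII : z ∈ II := hsub hz
          have e : φ g (φ c z) = φ c (φ g z) := by
            rw [← comp g c hzII, ← hcg.eq, comp c g hzII]
          have e2 : φ g (φ c z) = φ g z := by rw [e, hzb, hfixb]
          exact absurd (inj (mem c hzII) hzII e2) (nofix z hz1 hz2)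
      rw [img g, haa', hbb']
  -- closure of preservation under products and inverses
  have img_mul : ∀ g h : G, φ g '' Set.Icc a b = Set.Icc a b →
      φ h '' Set.Icc a b = Set.Icc a b → φ (g * h) '' Set.Icc a b = Set.Icc a b := by
    intro g h hg hh
    calc φ (g * h) '' Set.Icc a b = (φ g ∘ φ h) '' Set.Icc a b :=
          Set.image_congr fun y hy => comp g h (hsub hy)
      _ = φ g '' (φ h '' Set.Icc a b) := Set.image_comp _ _ _
      _ = Set.Icc a b := by rw [hh, hg]
  -- commuting elements act nicely on the orbit
  have gcpow : ∀ (g : G), Commute c g → ∀ (n : ℤ) {y : ℝ}, y ∈ II →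
      φ g (φ (c ^ n) y) = φ (c ^ n) (φ g y) := by
    intro g hcg n y hy
    rw [← comp g (c ^ n) hy, ← (hcg.zpow_left n).eq, comp (c ^ n) g hy]
  have zadd : ∀ (m n : ℤ), φ (c ^ m) (t n) = t (m + n) := by
    intro m n
    simp only [ht]
    rw [← comp (c ^ m) (c ^ n) hx, ← zpow_add]
  -- floor of an element preserving J
  have floor_exists : ∀ g : G, φ g '' Set.Icc a b = Set.Icc a b →
      ∃ n : ℤ, t n ≤ φ g x ∧ φ g x < t (n + 1) := by
    intro g hg
    rw [img g] at hg
    have hga_le : φ g a ≤ φ g b := (le_iff g amem bmem).2 hab.le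
    have e1 : φ g a = a := by
      have h2 : a ∈ Set.Icc (φ g a) (φ g b) := by rw [hg]; exact Set.left_mem_Icc.2 hab.le
      have h3 : φ g a ∈ Set.Icc a b := by rw [← hg]; exact Set.left_mem_Icc.2 hga_le
      exact le_antisymm h2.1 h3.1
    have e2 : φ g b = b := by
      have h2 : b ∈ Set.Icc (φ g a) (φ g b) := by rw [hg]; exact Set.right_mem_Icc.2 hab.le
      have h3 : φ g b ∈ Set.Icc a b := by rw [← hg]; exact Set.right_mem_Icc.2 hga_le
      exact le_antisymm h3.2 h2.2
    have hgx1 : a < φ g x := by rw [← e1]; exact (lt_iff g amem hx).2 hax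
    have hgx2 : φ g x < b := by rw [← e2]; exact (lt_iff g hx bmem).2 hxb
    exact floorEx _ hgx1 hgx2
  -- quasimorphism estimates
  have floor_mul : ∀ (g h : G) (p q : ℤ), Commute c g →
      (t p ≤ φ g x ∧ φ g x < t (p + 1)) → (t q ≤ φ h x ∧ φ h x < t (q + 1)) →
      t (p + q) ≤ φ (g * h) x ∧ φ (g * h) x < t (p + q + 1 + 1) := by
    intro g h p q hcg hp hq
    have hhx : φ h x ∈ II := mem h hx
    have hgx : φ g x ∈ II := mem g hx
    have e : φ (g * h) x = φ g (φ h x) := comp g h hx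
    constructor
    · calc t (p + q) = φ (c ^ q) (t p) := by rw [zadd q p, add_comm q p]
        _ ≤ φ (c ^ q) (φ g x) := (le_iff _ (tmem p) hgx).2 hp.1
        _ = φ g (t q) := (gcpow g hcg q hx).symm
        _ ≤ φ g (φ h x) := (le_iff g (tmem q) hhx).2 hq.1
        _ = φ (g * h) x := e.symm
    · calc φ (g * h) x = φ g (φ h x) := e
        _ < φ g (t (q + 1)) := (lt_iff g hhx (tmem _)).2 hq.2
        _ = φ (c ^ (q + 1)) (φ g x) := gcpow g hcg (q + 1) hx
        _ < φ (c ^ (q + 1)) (t (p + 1)) := (lt_iff _ hgx (tmem _)).2 hp.2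
        _ = t (p + q + 1 + 1) := by rw [zadd]; congr 1; ring
  have floor_inv : ∀ (g : G) (p : ℤ), Commute c g →
      (t p ≤ φ g x ∧ φ g x < t (p + 1)) →
      ∃ p' : ℤ, (t p' ≤ φ g⁻¹ x ∧ φ g⁻¹ x < t (p' + 1)) ∧ p' ≤ -p := by
    intro g p hcg hp
    have hw : φ g⁻¹ x ∈ II := mem _ hx
    have hgx : φ g x ∈ II := mem g hx
    have upper : φ g⁻¹ x ≤ t (-p) := by
      have h2 : φ g (φ g⁻¹ x) ≤ φ g (t (-p)) := by
        rw [invr g hx, gcpow g hcg (-p) hx]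
        calc x = t 0 := t0.symm
          _ = φ (c ^ (-p)) (t p) := by rw [zadd]; congr 1; ring
          _ ≤ φ (c ^ (-p)) (φ g x) := (le_iff _ (tmem p) hgx).2 hp.1
      exact (le_iff g hw (tmem _)).1 h2
    have lower : t (-p - 1) < φ g⁻¹ x := by
      have h2 : φ g (t (-p - 1)) < φ g (φ g⁻¹ x) := by
        rw [invr g hx, gcpow g hcg (-p - 1) hx]
        calc φ (c ^ (-p - 1)) (φ g x) < φ (c ^ (-p - 1)) (t (p + 1)) :=
              (lt_iff _ hgx (tmem _)).2 hp.2
          _ = t 0 := by rw [zadd]; congr 1; ring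
          _ = x := t0
      exact (lt_iff g (tmem _) hw).1 h2
    rcases eq_or_lt_of_le upper with h | h
    · refine ⟨-p, ⟨h.symm.le, ?_⟩, le_refl _⟩
      rw [h]; exact tstep (-p)
    · refine ⟨-p - 1, ⟨lower.le, ?_⟩, by omega⟩
      rwa [sub_add_cancel]
  have floor_unique : ∀ (v : ℝ) (p q : ℤ), (t p ≤ v ∧ v < t (p + 1)) →
      (t q ≤ v ∧ v < t (q + 1)) → p = q := by
    intro v p q hp hq
    have h1 : p < q + 1 := tmono.lt_iff_lt.1 (hp.1.trans_lt hq.2)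
    have h2 : q < p + 1 := tmono.lt_iff_lt.1 (hq.1.trans_lt hp.2)
    omega
  have refine2 : ∀ (v : ℝ) (m : ℤ), t m ≤ v → v < t (m + 1 + 1) →
      ∃ r : ℤ, (t r ≤ v ∧ v < t (r + 1)) ∧ r ≤ m + 1 := by
    intro v m h1 h2
    rcases lt_or_ge v (t (m + 1)) with h | h
    · exact ⟨m, ⟨h1, h⟩, by omega⟩
    · exact ⟨m + 1, ⟨h, h2⟩, le_refl _⟩
  -- endgame
  have hJ1 : φ g1 '' Set.Icc a b = Set.Icc a b := fixesJ g1 hc1 hm1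
  have hJ2 : φ g2 '' Set.Icc a b = Set.Icc a b := fixesJ g2 hc2 hm2
  have hA : φ (g1 ^ 2) '' Set.Icc a b = Set.Icc a b := by
    rw [pow_two]; exact img_mul _ _ hJ1 hJ1
  have hB : φ (g2 ^ 2) '' Set.Icc a b = Set.Icc a b := by
    rw [pow_two]; exact img_mul _ _ hJ2 hJ2
  have hcA : Commute c (g1 ^ 2) := hc1.pow_right 2
  have hcB : Commute c (g2 ^ 2) := hc2.pow_right 2
  obtain ⟨p, hp⟩ := floor_exists _ hA
  obtain ⟨q, hq⟩ := floor_exists _ hB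
  obtain ⟨p', hp', hp'2⟩ := floor_inv _ p hcA hp
  obtain ⟨q', hq', hq'2⟩ := floor_inv _ q hcB hq
  have hAB := floor_mul _ _ p q hcA hp hq
  have hAB' := floor_mul _ _ p' q' hcA.inv_right hp' hq'
  obtain ⟨r, hr, hr2⟩ := refine2 _ _ hAB.1 hAB.2
  obtain ⟨s, hs, hs2⟩ := refine2 _ _ hAB'.1 hAB'.2
  have hfin := floor_mul _ _ r s (hcA.mul_right hcB) hr hs
  have hprod : (g1 ^ 2 * g2 ^ 2) * ((g1 ^ 2)⁻¹ * (g2 ^ 2)⁻¹) = c ^ 4 := by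
    rw [← hrel]; group
  rw [hprod] at hfin
  obtain ⟨u, hu, hu2⟩ := refine2 _ _ hfin.1 hfin.2
  have hc4 : t 4 ≤ φ (c ^ 4) x ∧ φ (c ^ 4) x < t (4 + 1) := by
    have e : φ (c ^ (4 : ℕ)) x = t 4 := by
      simp only [ht]
      norm_cast
    rw [e]
    exact ⟨le_refl _, tstep 4⟩
  have h4 : u = 4 := floor_unique _ _ _ hu hc4
  omega


end HeisAux

/-- **Lemma 2.4.** Suppose the Heisenberg group `N₃` acts faithfully by
orientation-preserving homeomorphisms of `[0,1]`. If `x ∈ [0,1]` is not fixed by `h₃`,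
then at least one of `h₁, h₂` moves `J_{h₃}(x)`. -/
theorem heisenberg_moves_interval (φ : N3 → ℝ → ℝ)
    (hact : IsActionOnI φ) (hhomeo : ∀ g : N3, IsOPHomeoI (φ g))
    (hfaith : FaithfulOnI φ)
    (x : ℝ) (hx : x ∈ II) (hx3 : φ h₃ x ≠ x) :
    MovesSet (φ h₁) (Jseg φ h₃ x) ∨ MovesSet (φ h₂) (Jseg φ h₃ x) := by
  by_contra hcon
  push_neg at hcon
  obtain ⟨hm1, hm2⟩ := hcon
  rcases hx3.lt_or_gt with hlt | hlt
  · -- φ h₃ x < x : work with c = h₃⁻¹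
    have hmem3 : φ h₃ x ∈ II := (hhomeo h₃).1.mapsTo hx
    have hx' : x < φ h₃⁻¹ x := by
      have h2 := ((hhomeo h₃⁻¹).2.1.lt_iff_lt hmem3 hx).2 hlt
      have h3 : φ h₃⁻¹ (φ h₃ x) = x := by
        have h4 := hact.2 h₃⁻¹ h₃ hx
        simp only [inv_mul_cancel, Function.comp_apply] at h4
        rw [← h4]
        exact hact.1 hx
      rwa [h3] at h2
    have hJswap : Jseg φ h₃ x = Jseg φ h₃⁻¹ x := by
      have hr : (Set.range fun n : ℤ => φ (h₃ ^ n) x) =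
          Set.range fun n : ℤ => φ (h₃⁻¹ ^ n) x := by
        ext y
        constructor
        · rintro ⟨n, rfl⟩
          refine ⟨-n, ?_⟩
          show φ (h₃⁻¹ ^ (-n)) x = φ (h₃ ^ n) x
          rw [show (h₃⁻¹ : N3) ^ (-n) = h₃ ^ n by rw [inv_zpow, zpow_neg, inv_inv]]
        · rintro ⟨n, rfl⟩
          refine ⟨-n, ?_⟩
          show φ (h₃ ^ (-n)) x = φ (h₃⁻¹ ^ n) x
          rw [show (h₃ : N3) ^ (-n) = h₃⁻¹ ^ n by rw [inv_zpow, zpow_neg]]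
      have e1 : (⨅ n : ℤ, φ (h₃ ^ n) x) = ⨅ n : ℤ, φ (h₃⁻¹ ^ n) x := by
        rw [← sInf_range, ← sInf_range, hr]
      have e2 : (⨆ n : ℤ, φ (h₃ ^ n) x) = ⨆ n : ℤ, φ (h₃⁻¹ ^ n) x := by
        rw [← sSup_range, ← sSup_range, hr]
      rw [Jseg, Jseg, e1, e2]
    rw [hJswap] at hm1 hm2
    exact heis_key φ hact hhomeo h₃⁻¹ h₂ h₁ heis_comm2.inv_left heis_comm1.inv_left
      (heis_comm_sq h₂ h₁ h₃⁻¹ (by rw [← heis_rel_main]; group)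
        heis_comm2.inv_left heis_comm1.inv_left)
      x hx hx' hm2 hm1
  · exact heis_key φ hact hhomeo h₃ h₁ h₂ heis_comm1 heis_comm2
      (heis_comm_sq h₁ h₂ h₃ heis_rel_main heis_comm1 heis_comm2) x hx hlt hm1 hm2
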